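/- For n×n symmetric positive definite matrices X, Y, A, M: tr((X^{1/2} M^{-1} Y M^{-1} X^{1/2})^{1/2}) ≤ sqrt(tr(X A) · tr(M^{-1} Y M^{-1} A^{-1})), and the infimum over SPD A of the right-hand side equals the left-hand side. -/

import Mathlib

open Matrix

section Aux

variable {n : Type*} [Fintype n] [DecidableEq n]

omit [DecidableEq n] in
lemma aux_herm_transpose {A : Matrix n n ℝ} (h : A.IsHermitian) : Aᵀ = A := by
  have h2 : Aᴴ = Aᵀ := by ext i j; simp [conjTranspose_apply]
  rw [← h2, h]

omit [DecidableEq n] in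
lemma aux_tr_CS (P Q : Matrix n n ℝ) :
    (P * Q).trace ≤ Real.sqrt ((P * Pᵀ).trace * (Qᵀ * Q).trace) := by
  have h := Finset.sum_mul_sq_le_sq_mul_sq Finset.univ
    (fun p : n × n => P p.1 p.2) (fun p : n × n => Q p.2 p.1)
  have e1 : (P * Q).trace = ∑ p : n × n, P p.1 p.2 * Q p.2 p.1 := by
    simp [Matrix.trace, Matrix.mul_apply, Matrix.diag, Fintype.sum_prod_type]
  have e2 : (P * Pᵀ).trace = ∑ p : n × n, (P p.1 p.2) ^ 2 := by
    simp [Matrix.trace, Matrix.mul_apply, Matrix.diag, Fintype.sum_prod_type, sq]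
  have e3 : (Qᵀ * Q).trace = ∑ p : n × n, (Q p.2 p.1) ^ 2 := by
    simp [Matrix.trace, Matrix.mul_apply, Matrix.diag, Fintype.sum_prod_type, sq]
  calc (P * Q).trace ≤ |(P * Q).trace| := le_abs_self _
    _ = Real.sqrt ((P * Q).trace ^ 2) := (Real.sqrt_sq_eq_abs _).symm
    _ ≤ Real.sqrt ((P * Pᵀ).trace * (Qᵀ * Q).trace) := by
        apply Real.sqrt_le_sqrt
        rw [e1, e2, e3]; exact h

lemma aux_trace_nonneg {S : Matrix n n ℝ} (hS : S.PosDef) : 0 ≤ S.trace := by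
  rw [Matrix.trace]
  refine Finset.sum_nonneg fun i _ => le_of_lt ?_
  have h := hS.dotProduct_mulVec_pos (x := Pi.single i 1) (by simp [Function.ne_iff])
  simpa [dotProduct, mulVec, Pi.single_apply, Finset.sum_ite_eq] using h

lemma aux_posdef_conj {A P : Matrix n n ℝ} (hA : A.PosDef) (hP : P.PosDef) :
    (P * A * P).PosDef := by
  refine PosDef.of_dotProduct_mulVec_pos ?_ ?_
  · have := isHermitian_conjTranspose_mul_mul P hA.1
    rwa [hP.1] at this
  · intro v hv
    have hv' : P *ᵥ v ≠ 0 := by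
      intro hc
      apply hv
      have hinj : Function.Injective (P.mulVec) :=
        Matrix.mulVec_injective_iff_isUnit.2 hP.isUnit
      have : P *ᵥ v = P *ᵥ 0 := by simpa using hc
      exact hinj this
    have h := hA.dotProduct_mulVec_pos hv'
    have e : star v ⬝ᵥ (P * A * P) *ᵥ v = star (P *ᵥ v) ⬝ᵥ A *ᵥ (P *ᵥ v) := by
      have hPT : Pᵀ = P := aux_herm_transpose hP.1
      have hvP : v ᵥ* Pᵀ = P *ᵥ v := Matrix.vecMul_transpose ..
      rw [hPT] at hvP
      simp only [Matrix.dotProduct_mulVec, star_trivial, ← Matrix.vecMul_vecMul, hvP]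
    rw [e]; exact h

end Aux

/-- tr((X^{1/2} M⁻¹ Y M⁻¹ X^{1/2})^{1/2}) ≤ sqrt(tr(X A) tr(M⁻¹ Y M⁻¹ A⁻¹)) for all SPD A,
and the infimum over SPD A of the right-hand side equals the left-hand side. -/
theorem stmt10 {n : Type*} [Fintype n] [DecidableEq n]
    (X Y M sqX S : Matrix n n ℝ)
    (hX : X.PosDef) (hY : Y.PosDef) (hM : M.PosDef)
    (hsqX : sqX.PosDef) (hsqX2 : sqX * sqX = X)
    (hS : S.PosDef) (hS2 : S * S = sqX * M⁻¹ * Y * M⁻¹ * sqX) :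
    (∀ A : Matrix n n ℝ, A.PosDef →
      S.trace ≤ Real.sqrt ((X * A).trace * (M⁻¹ * Y * M⁻¹ * A⁻¹).trace)) ∧
    IsGLB
      {v : ℝ | ∃ A : Matrix n n ℝ, A.PosDef ∧
        v = Real.sqrt ((X * A).trace * (M⁻¹ * Y * M⁻¹ * A⁻¹).trace)}
      S.trace := by
  have hxT : sqXᵀ = sqX := aux_herm_transpose hsqX.1
  have hST : Sᵀ = S := aux_herm_transpose hS.1
  haveI : Invertible sqX := sqX.invertibleOfIsUnitDet (isUnit_iff_ne_zero.2 hsqX.det_pos.ne')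
  haveI : Invertible S := S.invertibleOfIsUnitDet (isUnit_iff_ne_zero.2 hS.det_pos.ne')
  have hxi : (sqX⁻¹)ᵀ = sqX⁻¹ := by rw [Matrix.transpose_nonsing_inv, hxT]
  -- the inequality
  have key : ∀ A : Matrix n n ℝ, A.PosDef →
      S.trace ≤ Real.sqrt ((X * A).trace * (M⁻¹ * Y * M⁻¹ * A⁻¹).trace) := by
    intro A hA
    set a := (open scoped MatrixOrder in CFC.sqrt A) with ha_def
    have haa : a * a = A :=
      (open scoped MatrixOrder in CFC.sqrt_mul_sqrt_self A hA.posSemidef.nonneg)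
    have haT : aᵀ = a := aux_herm_transpose (open scoped MatrixOrder in (CFC.sqrt_nonneg A).posSemidef).1
    haveI : Invertible A := A.invertibleOfIsUnitDet (isUnit_iff_ne_zero.2 hA.det_pos.ne')
    have hdeta : IsUnit a.det := by
      have h1 : a.det * a.det = A.det := by rw [← Matrix.det_mul, haa]
      refine isUnit_iff_ne_zero.2 fun hc => ?_
      have := hA.det_pos.ne'
      rw [← h1, hc, mul_zero] at this
      exact this rfl
    haveI : Invertible a := a.invertibleOfIsUnitDet hdeta
    have hai : (a⁻¹)ᵀ = a⁻¹ := by rw [Matrix.transpose_nonsing_inv, haT]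
    have hAinv : a⁻¹ * a⁻¹ = A⁻¹ := by rw [← haa, Matrix.mul_inv_rev]
    have hPQ : (sqX * a) * (a⁻¹ * (sqX⁻¹ * S)) = S := by
      simp [mul_assoc, Matrix.mul_inv_cancel_left_of_invertible]
    have h1 := aux_tr_CS (sqX * a) (a⁻¹ * (sqX⁻¹ * S))
    rw [hPQ] at h1
    have e1 : ((sqX * a) * (sqX * a)ᵀ).trace = (X * A).trace := by
      rw [Matrix.transpose_mul, haT, hxT]
      have h2 : (sqX * a) * (a * sqX) = ((sqX * a) * a) * sqX := by noncomm_ring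
      rw [h2, Matrix.trace_mul_comm, ← hsqX2, ← haa]
      congr 1
      noncomm_ring
    have e2 : ((a⁻¹ * (sqX⁻¹ * S))ᵀ * (a⁻¹ * (sqX⁻¹ * S))).trace
        = (M⁻¹ * Y * M⁻¹ * A⁻¹).trace := by
      have hQT : (a⁻¹ * (sqX⁻¹ * S))ᵀ = S * sqX⁻¹ * a⁻¹ := by
        simp [Matrix.transpose_mul, hai, hxi, hST, mul_assoc]
      rw [hQT]
      have h2 : S * sqX⁻¹ * a⁻¹ * (a⁻¹ * (sqX⁻¹ * S))
          = S * (sqX⁻¹ * a⁻¹ * (a⁻¹ * (sqX⁻¹ * S))) := by noncomm_ring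
      rw [h2, Matrix.trace_mul_comm]
      have h3 : sqX⁻¹ * a⁻¹ * (a⁻¹ * (sqX⁻¹ * S)) * S
          = sqX⁻¹ * ((a⁻¹ * a⁻¹) * (sqX⁻¹ * (S * S))) := by noncomm_ring
      rw [h3, hAinv, hS2]
      have h4 : sqX * M⁻¹ * Y * M⁻¹ * sqX = sqX * (M⁻¹ * Y * M⁻¹ * sqX) := by noncomm_ring
      rw [h4, Matrix.inv_mul_cancel_left_of_invertible, Matrix.trace_mul_comm]
      have h5 : A⁻¹ * (M⁻¹ * Y * M⁻¹ * sqX) * sqX⁻¹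
          = A⁻¹ * (M⁻¹ * Y * M⁻¹) * (sqX * sqX⁻¹) := by noncomm_ring
      rw [h5, Matrix.mul_inv_of_invertible, mul_one, Matrix.trace_mul_comm]
    rw [e1, e2] at h1
    exact h1
  refine ⟨key, ?_, ?_⟩
  · rintro v ⟨A, hA, rfl⟩
    exact key A hA
  · intro b hb
    have hA0 : (sqX⁻¹ * S * sqX⁻¹).PosDef := aux_posdef_conj hS hsqX.inv
    have t1 : (X * (sqX⁻¹ * S * sqX⁻¹)).trace = S.trace := by
      have h2 : X * (sqX⁻¹ * S * sqX⁻¹) = sqX * (sqX * (sqX⁻¹ * (S * sqX⁻¹))) := by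
        rw [← hsqX2]; noncomm_ring
      rw [h2, Matrix.mul_inv_cancel_left_of_invertible, Matrix.trace_mul_comm]
      have h3 : S * sqX⁻¹ * sqX = S := by
        rw [mul_assoc, Matrix.nonsing_inv_mul sqX (isUnit_iff_ne_zero.2 hsqX.det_pos.ne'),
          mul_one]
      rw [h3]
    have t2 : (sqX⁻¹ * S * sqX⁻¹)⁻¹ = sqX * (S⁻¹ * sqX) := by
      rw [Matrix.mul_inv_rev, Matrix.mul_inv_rev, Matrix.inv_inv_of_invertible, ← mul_assoc]
    have t3 : (M⁻¹ * Y * M⁻¹ * (sqX⁻¹ * S * sqX⁻¹)⁻¹).trace = S.trace := by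
      rw [t2]
      have h2 : M⁻¹ * Y * M⁻¹ * (sqX * (S⁻¹ * sqX))
          = (M⁻¹ * Y * M⁻¹ * sqX * S⁻¹) * sqX := by noncomm_ring
      rw [h2, Matrix.trace_mul_comm]
      have h3 : sqX * (M⁻¹ * Y * M⁻¹ * sqX * S⁻¹) = (sqX * M⁻¹ * Y * M⁻¹ * sqX) * S⁻¹ := by
        noncomm_ring
      rw [h3, ← hS2, mul_assoc, Matrix.mul_inv_of_invertible, mul_one]
    refine hb ⟨sqX⁻¹ * S * sqX⁻¹, hA0, ?_⟩
    rw [t1, t3, Real.sqrt_mul_self (aux_trace_nonneg hS)]
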